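/- Single connected component: for every natural number n, any two histories of length n are connected by finitely many steps of the relation R; that is, the set of all histories of length n forms a single R-connected component (equivalently, the induced Kripke model on histories of length n has exactly one strongly connected component with respect to the union of the two indistinguishability relations). -/

import Mathlib

/-- Transition function: reset (`false`) always yields Off (`false`),
    toggle (`true`) flips the location. -/
def step (l a : Bool) : Bool := if a then !l else false

/-- A history: an initial location together with a list of actions. -/
abbrev Hist := Bool × List Bool

/-- The sequence of locations visited along a history (length = #actions + 1). -/
def locSeq (h : Hist) : List Bool := List.scanl step h.1 h.2

/-- The last location of a history (the final entry of `locSeq`). -/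
def lastLoc (h : Hist) : Bool := List.foldl step h.1 h.2

/-- Appending an action to a history. -/
def ext (h : Hist) (a : Bool) : Hist := (h.1, h.2 ++ [a])

/-- Human indistinguishability: equal action lists. -/
def humanInd (h₁ h₂ : Hist) : Prop := h₁.2 = h₂.2

/-- AI indistinguishability: equal location sequences. -/
def aiInd (h₁ h₂ : Hist) : Prop := locSeq h₁ = locSeq h₂

/-- The union of the two indistinguishability relations. -/
def GRel (h₁ h₂ : Hist) : Prop := humanInd h₁ h₂ ∨ aiInd h₁ h₂

/-- The history `(Off, rⁿ)`: initial location Off, then `n` reset actions. -/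
def hn (n : ℕ) : Hist := (false, List.replicate n false)

/-- `reachLe k h g`: `g` is reachable from `h` by at most `k` steps of `GRel`. -/
def reachLe : ℕ → Hist → Hist → Prop
  | 0, h, g => h = g
  | k+1, h, g => reachLe k h g ∨ ∃ h', GRel h h' ∧ reachLe k h' g

lemma locSeq_ext' (as : List Bool) : ∀ (l a : Bool),
    locSeq (l, as ++ [a]) = locSeq (l, as) ++ [step (lastLoc (l, as)) a] := by
  induction as with
  | nil => intro l a; simp [locSeq, lastLoc, List.scanl]
  | cons x xs ih =>
    intro l a
    simp only [locSeq, lastLoc, List.cons_append, List.scanl_cons, List.foldl_cons]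
    have := ih (step l x) a
    simp only [locSeq, lastLoc] at this
    rw [this]

lemma locSeq_ext (h : Hist) (a : Bool) :
    locSeq (ext h a) = locSeq h ++ [step (lastLoc h) a] := by
  obtain ⟨l, as⟩ := h
  exact locSeq_ext' as l a

lemma getLastD_locSeq (as : List Bool) : ∀ (l d : Bool),
    (locSeq (l, as)).getLastD d = lastLoc (l, as) := by
  induction as with
  | nil => intro l d; simp [locSeq, lastLoc, List.scanl]
  | cons x xs ih =>
    intro l d
    simp only [locSeq, lastLoc, List.scanl_cons, List.foldl_cons, List.getLastD_cons]
    exact ih (step l x) l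

lemma lastLoc_of_locSeq {h g : Hist} (e : locSeq h = locSeq g) : lastLoc h = lastLoc g := by
  obtain ⟨l, as⟩ := h; obtain ⟨l', bs⟩ := g
  rw [← getLastD_locSeq as l true, ← getLastD_locSeq bs l' true, e]

lemma grel_ext {h g : Hist} (a : Bool) (hr : GRel h g) : GRel (ext h a) (ext g a) := by
  rcases hr with hr | hr
  · refine Or.inl ?_
    unfold humanInd at hr ⊢
    simp [ext, hr]
  · refine Or.inr ?_
    have hl := lastLoc_of_locSeq hr
    unfold aiInd at hr ⊢
    rw [locSeq_ext, locSeq_ext, hr, hl]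

lemma rtg_ext {h g : Hist} (a : Bool) (hr : Relation.ReflTransGen GRel h g) :
    Relation.ReflTransGen GRel (ext h a) (ext g a) := by
  induction hr with
  | refl => exact .refl
  | tail _ hstep ih => exact ih.tail (grel_ext a hstep)

def w (m : ℕ) : Hist := (decide (m % 2 = 0), List.replicate m true)

lemma fold_rep : ∀ (m : ℕ) (l : Bool),
    List.foldl step l (List.replicate m true) = (l != decide (m % 2 = 1)) := by
  intro m
  induction m with
  | zero => intro l; cases l <;> simp
  | succ k ih =>
    intro l
    rw [List.replicate_succ, List.foldl_cons, ih]
    have : step l true = !l := by simp [step]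
    rw [this]
    rcases Nat.mod_two_eq_zero_or_one k with hk | hk <;>
      cases l <;> simp [Nat.add_mod, hk]

lemma lastLoc_w (m : ℕ) : lastLoc (w m) = true := by
  simp only [lastLoc, w, fold_rep]
  rcases Nat.mod_two_eq_zero_or_one m with hk | hk <;> simp [hk]

/-- single connected component: any two histories of length `n`
    are connected by finitely many steps of `GRel`. -/
theorem stmt9 (n : ℕ) (h g : Hist) (hl : h.2.length = n) (hg : g.2.length = n) :
    Relation.ReflTransGen GRel h g := by
  induction n generalizing h g with
  | zero =>
    exact Relation.ReflTransGen.single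
      (Or.inl ((List.eq_nil_of_length_eq_zero hl).trans
        (List.eq_nil_of_length_eq_zero hg).symm))
  | succ m ih =>
    obtain ⟨x, xs⟩ := h
    obtain ⟨y, ys⟩ := g
    rcases List.eq_nil_or_concat xs with h2 | ⟨as, a, h2⟩
    · rw [h2] at hl; simp at hl
    rcases List.eq_nil_or_concat ys with g2 | ⟨bs, b, g2⟩
    · rw [g2] at hg; simp at hg
    subst h2; subst g2
    simp only [List.concat_eq_append] at hl hg ⊢
    have has : as.length = m := by simpa using hl
    have hbs : bs.length = m := by simpa using hg
    have hwlen : (w m).2.length = m := by simp [w]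
    have p1 : Relation.ReflTransGen GRel (ext (x, as) a) (ext (w m) a) :=
      rtg_ext a (ih (x, as) (w m) has hwlen)
    have p2 : Relation.ReflTransGen GRel (ext (w m) b) (ext (y, bs) b) :=
      rtg_ext b (ih (w m) (y, bs) hwlen hbs)
    have pmid : GRel (ext (w m) a) (ext (w m) b) := by
      refine Or.inr ?_
      unfold aiInd
      rw [locSeq_ext, locSeq_ext, lastLoc_w]
      have : ∀ c : Bool, step true c = false := by intro c; cases c <;> simp [step]
      rw [this, this]
    have he : ext (x, as) a = (x, as ++ [a]) := rfl
    have hge : ext (y, bs) b = (y, bs ++ [b]) := rfl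
    rw [he] at p1; rw [hge] at p2
    exact (p1.tail pmid).trans p2
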